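/- Let I be a monomial ideal in S = K[x_1,…,x_n], and let F: I = I_0 ⊂ I_1 ⊂ ⋯ ⊂ I_r = S be a filtration with I_j = (I_{j−1}, u_j) for monomials u_j ∈ S. Define the polarized filtration F^p: I^p = J_0 ⊂ J_1 ⊂ ⋯ ⊂ J_r = T by J_j = (J_{j−1}, u_j^p). Then F is a prime filtration of S/I (i.e., every I_{j−1} : u_j is a prime ideal) if and only if F^p is a prime filtration of T/I^p (i.e., every J_{j−1} : u_j^p is a prime ideal). -/

import Mathlib

open MvPolynomial

/-- The monomial `x^a` in `K[x_i : i ∈ σ]`. -/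
noncomputable def mono (K : Type*) [Field K] {σ : Type*} (a : σ →₀ ℕ) :
    MvPolynomial σ K :=
  MvPolynomial.monomial a 1

/-- An ideal is a monomial ideal if it is generated by monomials. -/
def IsMonomialIdeal {K : Type*} [Field K] {σ : Type*}
    (I : Ideal (MvPolynomial σ K)) : Prop :=
  ∃ A : Set (σ →₀ ℕ), I = Ideal.span ((fun a => mono K a) '' A)

/-- `IsPrimeFiltration I c u` says that `c` is a chain of (monomial) ideals
`I = I₀ ⊆ I₁ ⊆ ⋯ ⊆ I_r = S` with `I_j = I_{j-1} + (x^{u j})` and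
`I_{j-1} : x^{u j}` a prime ideal, i.e. `I_j/I_{j-1} ≅ S/P_j`. -/
def IsPrimeFiltration {K : Type*} [Field K] {σ : Type*}
    (I : Ideal (MvPolynomial σ K)) {r : ℕ}
    (c : Fin (r + 1) → Ideal (MvPolynomial σ K)) (u : Fin r → (σ →₀ ℕ)) : Prop :=
  c 0 = I ∧ c (Fin.last r) = ⊤ ∧
    (∀ j : Fin r, c j.succ = c j.castSucc ⊔ Ideal.span {mono K (u j)}) ∧
    (∀ j : Fin r, ((c j.castSucc).colon (Ideal.span {mono K (u j)})).IsPrime)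

/-- The `j`-th prime factor `P_j = I_{j-1} : u_j` of a prime filtration. -/
noncomputable def filtFactor {K : Type*} [Field K] {σ : Type*} {r : ℕ}
    (c : Fin (r + 1) → Ideal (MvPolynomial σ K)) (u : Fin r → (σ →₀ ℕ)) (j : Fin r) :
    Ideal (MvPolynomial σ K) :=
  (c j.castSucc).colon (Ideal.span {mono K (u j)})

/-- A prime filtration is pretty clean if `i < j` and `P_i ⊆ P_j` imply `P_i = P_j`. -/
def IsPrettyCleanFiltration {K : Type*} [Field K] {σ : Type*}
    (I : Ideal (MvPolynomial σ K)) {r : ℕ}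
    (c : Fin (r + 1) → Ideal (MvPolynomial σ K)) (u : Fin r → (σ →₀ ℕ)) : Prop :=
  IsPrimeFiltration I c u ∧
    ∀ i j : Fin r, i < j → filtFactor c u i ≤ filtFactor c u j →
      filtFactor c u i = filtFactor c u j

/-- A monomial ideal is pretty clean if it admits a pretty clean filtration. -/
def IsPrettyClean {K : Type*} [Field K] {σ : Type*}
    (I : Ideal (MvPolynomial σ K)) : Prop :=
  ∃ (r : ℕ) (c : Fin (r + 1) → Ideal (MvPolynomial σ K)) (u : Fin r → (σ →₀ ℕ)),
    IsPrettyCleanFiltration I c u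

/-- A prime filtration is clean if its support is the set of minimal primes of `I`. -/
def IsCleanFiltration {K : Type*} [Field K] {σ : Type*}
    (I : Ideal (MvPolynomial σ K)) {r : ℕ}
    (c : Fin (r + 1) → Ideal (MvPolynomial σ K)) (u : Fin r → (σ →₀ ℕ)) : Prop :=
  IsPrimeFiltration I c u ∧
    {P | ∃ j : Fin r, filtFactor c u j = P} = I.minimalPrimes

/-- A monomial ideal is clean if it admits a clean filtration. -/
def IsClean {K : Type*} [Field K] {σ : Type*}
    (I : Ideal (MvPolynomial σ K)) : Prop :=
  ∃ (r : ℕ) (c : Fin (r + 1) → Ideal (MvPolynomial σ K)) (u : Fin r → (σ →₀ ℕ)),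
    IsCleanFiltration I c u


/-- The exponent vector of the polarization `u^p = ∏ᵢ ∏_{j<aᵢ} x_{ij}` of the
monomial `u = ∏ᵢ xᵢ^{aᵢ}`: the squarefree exponent supported on
`{(i,j) : j < a i}`, in the variables of `T = K[x_{ij}]`. -/
noncomputable def polarExp {n : ℕ} (a : Fin n →₀ ℕ) : (Fin n × ℕ) →₀ ℕ :=
  Finsupp.indicator
    (a.support.biUnion fun i => (Finset.range (a i)).image fun j => (i, j))
    (fun _ _ => 1)

/-- The polarization `I^p ⊂ T = K[x_{ij}]` of a monomial ideal `I ⊂ S`: the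
ideal generated by the polarizations of the monomials of `I` (for a monomial
ideal this is the ideal generated by the polarizations of any set of monomial
generators). -/
noncomputable def polarIdeal {K : Type*} [Field K] {n : ℕ}
    (I : Ideal (MvPolynomial (Fin n) K)) : Ideal (MvPolynomial (Fin n × ℕ) K) :=
  Ideal.span ((fun a => mono K (polarExp a)) '' {a : Fin n →₀ ℕ | mono K a ∈ I})

section Aux
variable {K : Type*} [Field K] {σ : Type*}


lemma mem_span_mono_iff {A : Set (σ →₀ ℕ)} {p : MvPolynomial σ K} :
    p ∈ Ideal.span ((fun a => mono K a) '' A) ↔ ∀ v ∈ p.support, ∃ a ∈ A, a ≤ v :=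
  mem_ideal_span_monomial_image

lemma mono_mem_span_iff {A : Set (σ →₀ ℕ)} {b : σ →₀ ℕ} :
    mono K b ∈ Ideal.span ((fun a => mono K a) '' A) ↔ ∃ a ∈ A, a ≤ b := by
  classical
  rw [mem_span_mono_iff]
  constructor
  · intro h
    exact h b (by
      rw [mono, mem_support_iff, coeff_monomial, if_pos rfl]; exact one_ne_zero)
  · intro h v hv
    have : v = b := by
      classical
      simpa [mono, support_monomial] using hv
    subst this; exact h

lemma span_mono_eq_top_iff {A : Set (σ →₀ ℕ)} :
    Ideal.span ((fun a => mono K a) '' A) = ⊤ ↔ (0 : σ →₀ ℕ) ∈ A := by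
  constructor
  · intro h
    have h1 : mono K (0 : σ →₀ ℕ) ∈ Ideal.span ((fun a => mono K a) '' A) := by
      rw [h]; trivial
    obtain ⟨a, ha, hle⟩ := mono_mem_span_iff.mp h1
    have : a = 0 := le_antisymm hle zero_le
    rwa [this] at ha
  · intro h
    rw [Ideal.eq_top_iff_one]
    have : mono K (0 : σ →₀ ℕ) = 1 := by simp [mono]
    rw [← this]
    exact mono_mem_span_iff.mpr ⟨0, h, le_rfl⟩

lemma colon_span_mono (A : Set (σ →₀ ℕ)) (u : σ →₀ ℕ) :
    (Ideal.span ((fun a => mono K a) '' A)).colon (Ideal.span {mono K u})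
      = Ideal.span ((fun a => mono K a) '' ((· - u) '' A)) := by
  ext p
  rw [Ideal.mem_colon_span_singleton, mem_span_mono_iff, mem_span_mono_iff]
  constructor
  · intro h v hv
    have hc : coeff (v + u) (p * mono K u) ≠ 0 := by
      rw [mono, coeff_mul_monomial, mul_one]
      exact mem_support_iff.mp hv
    obtain ⟨a, ha, hle⟩ := h (v + u) (mem_support_iff.mpr hc)
    exact ⟨a - u, ⟨a, ha, rfl⟩, tsub_le_iff_right.mpr hle⟩
  · intro h w hw
    have hc := mem_support_iff.mp hw
    rw [mono, coeff_mul_monomial', mul_one] at hc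
    split_ifs at hc with hu
    · obtain ⟨b, ⟨a, ha, rfl⟩, hle⟩ := h (w - u) (mem_support_iff.mpr hc)
      refine ⟨a, ha, ?_⟩
      have := tsub_le_iff_right.mp hle
      rwa [tsub_add_cancel_of_le hu] at this
    · exact absurd rfl hc


lemma mono_single_eq_X (i : σ) : mono K (Finsupp.single i 1) = X i := by
  simp [mono, X]

lemma isPrime_span_mono_single (V : Set σ) :
    (Ideal.span ((fun a => mono K a) ''
      ((fun i => Finsupp.single i (1 : ℕ)) '' V))).IsPrime := by
  classical
  set g : σ → MvPolynomial {i : σ // i ∉ V} K :=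
    fun i => if h : i ∈ V then 0 else X ⟨i, h⟩ with hg
  set Q := Ideal.span ((fun a => mono K a) ''
      ((fun i => Finsupp.single i (1 : ℕ)) '' V)) with hQ
  have hXmem : ∀ i ∈ V, (X i : MvPolynomial σ K) ∈ Q := by
    intro i hi
    rw [← mono_single_eq_X]
    exact Ideal.subset_span ⟨Finsupp.single i 1, ⟨i, hi, rfl⟩, rfl⟩
  set f : σ → MvPolynomial σ K := fun i => if i ∈ V then 0 else X i with hf
  have key : ∀ p : MvPolynomial σ K, p - aeval f p ∈ Q := by
    intro p
    induction p using MvPolynomial.induction_on with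
    | C a => simp [aeval_C]
    | add p q hp hq =>
        have := Q.add_mem hp hq
        simpa [map_add, add_sub_add_comm] using this
    | mul_X p i hp =>
        rw [map_mul, aeval_X, hf]
        by_cases hi : i ∈ V
        · simp only [if_pos hi, mul_zero, sub_zero]
          exact Ideal.mul_mem_left _ _ (hXmem i hi)
        · simp only [if_neg hi]
          have : p * X i - aeval f p * X i = (p - aeval f p) * X i := by ring
          rw [this]
          exact Ideal.mul_mem_right _ _ hp
  have hcomp : ∀ p : MvPolynomial σ K,
      aeval f p = rename (Subtype.val) (aeval g p) := by
    intro p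
    have : (aeval f : MvPolynomial σ K →ₐ[K] MvPolynomial σ K)
        = (rename (Subtype.val)).comp (aeval g) := by
      apply MvPolynomial.algHom_ext
      intro i
      by_cases hi : i ∈ V <;> simp [hf, hg, hi]
    rw [this]; rfl
  have hker : Q = RingHom.ker (aeval g : MvPolynomial σ K →ₐ[K] _) := by
    apply le_antisymm
    · rw [hQ, Ideal.span_le]
      rintro _ ⟨_, ⟨i, hi, rfl⟩, rfl⟩
      show mono K (Finsupp.single i 1) ∈ _
      rw [mono_single_eq_X]
      simp [RingHom.mem_ker, hg, hi]
    · intro p hp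
      rw [RingHom.mem_ker] at hp
      have := key p
      rwa [hcomp p, hp, map_zero, sub_zero] at this
  rw [hker]
  exact RingHom.ker_isPrime _

lemma le_single_one_iff {a : σ →₀ ℕ} {i : σ} (ha : a ≠ 0) :
    a ≤ Finsupp.single i 1 ↔ a = Finsupp.single i 1 := by
  classical
  constructor
  · intro h
    have hji : ∀ j, j ≠ i → a j = 0 := by
      intro j hj
      have := h j
      rwa [Finsupp.single_apply, if_neg (Ne.symm hj), Nat.le_zero] at this
    have hi : a i = 1 := by
      have h1 : a i ≤ 1 := by simpa using h i
      rcases Nat.lt_or_ge (a i) 1 with h2 | h2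
      · exfalso; apply ha
        ext j
        simp only [Finsupp.coe_zero, Pi.zero_apply]
        by_cases hj : j = i
        · subst hj; omega
        · exact hji j hj
      · omega
    ext j
    by_cases hj : j = i
    · subst hj; simp [hi]
    · simp [hji j hj, Finsupp.single_apply, Ne.symm hj]
  · rintro rfl; exact le_rfl

lemma span_mono_isPrime_iff {B : Set (σ →₀ ℕ)} :
    (Ideal.span ((fun a => mono K a) '' B)).IsPrime ↔
      (∀ b ∈ B, b ≠ 0) ∧
        ∀ b ∈ B, ∃ i, 1 ≤ b i ∧ Finsupp.single i 1 ∈ B := by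
  classical
  constructor
  · intro hP
    have h0 : ∀ b ∈ B, b ≠ 0 := by
      intro b hb hb0
      exact hP.ne_top (span_mono_eq_top_iff.mpr (hb0 ▸ hb))
    refine ⟨h0, fun b hb => ?_⟩
    have hmem : mono K b ∈ Ideal.span ((fun a => mono K a) '' B) :=
      Ideal.subset_span ⟨b, hb, rfl⟩
    have hprod : mono K b
        = ∏ i ∈ b.support, (X i : MvPolynomial σ K) ^ b i := by
      rw [mono, monomial_eq, C_1, one_mul]; rfl
    rw [hprod] at hmem
    obtain ⟨i, hi, hXi⟩ := (Ideal.IsPrime.prod_mem_iff).mp hmem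
    have hbi : 1 ≤ b i := Nat.one_le_iff_ne_zero.mpr (Finsupp.mem_support_iff.mp hi)
    have hX : (X i : MvPolynomial σ K) ∈ Ideal.span ((fun a => mono K a) '' B) :=
      hP.mem_of_pow_mem _ hXi
    rw [← mono_single_eq_X, mono_mem_span_iff] at hX
    obtain ⟨a, ha, hle⟩ := hX
    refine ⟨i, hbi, ?_⟩
    rwa [(le_single_one_iff (h0 a ha)).mp hle] at ha
  · rintro ⟨h0, h1⟩
    set V : Set σ := {i | Finsupp.single i (1 : ℕ) ∈ B} with hV
    have heq : Ideal.span ((fun a => mono K a) '' B)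
        = Ideal.span ((fun a => mono K a) ''
            ((fun i => Finsupp.single i (1 : ℕ)) '' V)) := by
      apply le_antisymm
      · rw [Ideal.span_le]
        rintro _ ⟨b, hb, rfl⟩
        show mono K b ∈ _
        obtain ⟨i, hbi, hsi⟩ := h1 b hb
        have hle : Finsupp.single i 1 ≤ b := Finsupp.single_le_iff.mpr hbi
        have : mono K b = mono K (b - Finsupp.single i 1) * mono K (Finsupp.single i 1) := by
          rw [mono, mono, mono, monomial_mul, mul_one, tsub_add_cancel_of_le hle]
        rw [this]
        exact Ideal.mul_mem_left _ _
          (Ideal.subset_span ⟨Finsupp.single i 1, ⟨i, hsi, rfl⟩, rfl⟩)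
      · rw [Ideal.span_le]
        rintro _ ⟨_, ⟨i, hi, rfl⟩, rfl⟩
        exact Ideal.subset_span ⟨Finsupp.single i 1, hi, rfl⟩
    rw [heq]
    exact isPrime_span_mono_single V

end Aux


section Polar
variable {n : ℕ}

lemma mem_polarSupp {a : Fin n →₀ ℕ} {i : Fin n} {j : ℕ} :
    (i, j) ∈ (a.support.biUnion fun i => (Finset.range (a i)).image fun j => (i, j))
      ↔ j < a i := by
  simp only [Finset.mem_biUnion, Finset.mem_image, Finset.mem_range, Finsupp.mem_support_iff,
    Prod.mk.injEq]
  constructor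
  · rintro ⟨i', hi', k, hk, rfl, rfl⟩; exact hk
  · intro h; exact ⟨i, by omega, j, h, rfl, rfl⟩

lemma polarExp_apply (a : Fin n →₀ ℕ) (i : Fin n) (j : ℕ) :
    polarExp a (i, j) = if j < a i then 1 else 0 := by
  classical
  by_cases h : j < a i
  · rw [if_pos h, polarExp, Finsupp.indicator_of_mem (mem_polarSupp.mpr h)]
  · rw [if_neg h, polarExp, Finsupp.indicator_of_notMem (fun hc => h (mem_polarSupp.mp hc))]

lemma polarExp_le_iff {a b : Fin n →₀ ℕ} : polarExp a ≤ polarExp b ↔ a ≤ b := by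
  rw [Finsupp.le_def, Finsupp.le_def]
  constructor
  · intro h i
    by_contra hc
    push_neg at hc
    have := h (i, b i)
    rw [polarExp_apply, polarExp_apply, if_pos hc, if_neg (lt_irrefl _)] at this
    omega
  · intro h p
    obtain ⟨i, j⟩ := p
    rw [polarExp_apply, polarExp_apply]
    have := h i
    split_ifs with h1 h2 <;> omega

lemma polarExp_eq_zero_iff {a : Fin n →₀ ℕ} : polarExp a = 0 ↔ a = 0 := by
  constructor
  · intro h
    ext i
    have := DFunLike.congr_fun h (i, 0)
    rw [polarExp_apply] at this
    simp only [Finsupp.coe_zero, Pi.zero_apply] at this ⊢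
    split_ifs at this <;> omega
  · rintro rfl
    ext p
    obtain ⟨i, j⟩ := p
    rw [polarExp_apply]
    simp

lemma polar_sub_apply (a u : Fin n →₀ ℕ) (i : Fin n) (j : ℕ) :
    (polarExp a - polarExp u) (i, j) = if j < a i ∧ ¬ j < u i then 1 else 0 := by
  rw [Finsupp.tsub_apply, polarExp_apply, polarExp_apply]
  split_ifs <;> omega

lemma sub_eq_single_iff {a u : Fin n →₀ ℕ} {i : Fin n} :
    a - u = Finsupp.single i 1 ↔
      (a i = u i + 1 ∧ ∀ i', i' ≠ i → a i' ≤ u i') := by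
  classical
  constructor
  · intro h
    have hi := DFunLike.congr_fun h i
    rw [Finsupp.tsub_apply, Finsupp.single_eq_same] at hi
    refine ⟨by omega, fun i' hi' => ?_⟩
    have := DFunLike.congr_fun h i'
    rw [Finsupp.tsub_apply, Finsupp.single_eq_of_ne' (Ne.symm hi')] at this
    omega
  · rintro ⟨h1, h2⟩
    ext i'
    rw [Finsupp.tsub_apply, Finsupp.single_apply]
    by_cases hi' : i = i'
    · subst hi'; rw [if_pos rfl]; omega
    · rw [if_neg hi']; have := h2 i' (fun hh => hi' hh.symm); omega

lemma polar_sub_eq_single_iff {a u : Fin n →₀ ℕ} {i : Fin n} {k : ℕ} :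
    polarExp a - polarExp u = Finsupp.single (i, k) 1 ↔
      (k = u i ∧ a i = u i + 1 ∧ ∀ i', i' ≠ i → a i' ≤ u i') := by
  classical
  constructor
  · intro h
    have H : ∀ (i' : Fin n) (j : ℕ), (j < a i' ∧ u i' ≤ j) ↔ ((i, k) = (i', j)) := by
      intro i' j
      have hj := DFunLike.congr_fun h (i', j)
      rw [polar_sub_apply, Finsupp.single_apply] at hj
      constructor
      · intro hc
        by_contra hne
        rw [if_pos ⟨hc.1, by omega⟩, if_neg hne] at hj; omega
      · intro hc
        by_contra hcn
        rw [if_neg (fun hx => hcn ⟨hx.1, Nat.le_of_not_lt hx.2⟩), if_pos hc] at hj; omega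
    have hk0 : k < a i ∧ u i ≤ k := (H i k).mpr rfl
    have hui : u i < a i := by omega
    have hk : k = u i := by
      have := (H i (u i)).mp ⟨hui, le_rfl⟩
      simp only [Prod.mk.injEq, true_and] at this
      exact this
    subst hk
    refine ⟨rfl, ?_, ?_⟩
    · by_contra hc
      have h1 : u i + 1 < a i := by omega
      have := (H i (u i + 1)).mp ⟨h1, by omega⟩
      simp only [Prod.mk.injEq, true_and] at this
      omega
    · intro i' hi'
      by_contra hc
      have := (H i' (u i')).mp ⟨by omega, le_rfl⟩
      simp only [Prod.mk.injEq] at this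
      exact hi' this.1.symm
  · rintro ⟨rfl, h1, h2⟩
    ext p
    obtain ⟨i', j⟩ := p
    rw [polar_sub_apply, Finsupp.single_apply]
    by_cases hii : i = i'
    · subst hii
      simp only [Prod.mk.injEq, true_and]
      rw [h1]
      by_cases hj : j = u i
      · rw [if_pos ⟨by omega, by omega⟩, if_pos hj.symm]
      · rw [if_neg (by omega), if_neg (fun hc => hj hc.symm)]
    · have hle := h2 i' (fun hh => hii hh.symm)
      rw [if_neg (fun hx => by omega), if_neg (by simp [Prod.mk.injEq, hii])]

end Polar



section Main
variable {K : Type*} [Field K] {n : ℕ}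

/-- The canonical combinatorial condition equivalent to primality of the colon. -/
def Cond (A' : Set (Fin n →₀ ℕ)) (u : Fin n →₀ ℕ) : Prop :=
  (∀ a ∈ A', ¬ a ≤ u) ∧
    ∀ a ∈ A', ∃ i, u i < a i ∧
      ∃ a' ∈ A', a' i = u i + 1 ∧ ∀ i', i' ≠ i → a' i' ≤ u i'

lemma prime_colon_iff_cond (A' : Set (Fin n →₀ ℕ)) (u : Fin n →₀ ℕ) :
    ((Ideal.span ((fun a => mono K a) '' A')).colon
      (Ideal.span {mono K u})).IsPrime ↔ Cond A' u := by
  rw [colon_span_mono, span_mono_isPrime_iff]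
  constructor
  · rintro ⟨h0, h1⟩
    constructor
    · intro a ha hle
      exact h0 _ ⟨a, ha, rfl⟩ (tsub_eq_zero_iff_le.mpr hle)
    · intro a ha
      obtain ⟨i, hi, a', ha', heq⟩ := h1 (a - u) ⟨a, ha, rfl⟩
      have hA := sub_eq_single_iff.mp heq
      refine ⟨i, ?_, a', ha', hA⟩
      rw [Finsupp.tsub_apply] at hi
      omega
  · rintro ⟨h0, h1⟩
    constructor
    · rintro _ ⟨a, ha, rfl⟩ hz
      exact h0 a ha (tsub_eq_zero_iff_le.mp hz)
    · rintro _ ⟨a, ha, rfl⟩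
      obtain ⟨i, hlt, a', ha', hA⟩ := h1 a ha
      refine ⟨i, ?_, ⟨a', ha', sub_eq_single_iff.mpr hA⟩⟩
      rw [Finsupp.tsub_apply]
      omega

lemma polar_prime_colon_iff_cond (A' : Set (Fin n →₀ ℕ)) (u : Fin n →₀ ℕ) :
    ((Ideal.span ((fun a => mono K a) '' (polarExp '' A'))).colon
      (Ideal.span {mono K (polarExp u)})).IsPrime ↔ Cond A' u := by
  rw [colon_span_mono, span_mono_isPrime_iff, Set.image_image]
  constructor
  · rintro ⟨h0, h1⟩
    constructor
    · intro a ha hle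
      exact h0 _ ⟨a, ha, rfl⟩
        (tsub_eq_zero_iff_le.mpr (polarExp_le_iff.mpr hle))
    · intro a ha
      obtain ⟨p, hp, a', ha', heq⟩ := h1 _ ⟨a, ha, rfl⟩
      obtain ⟨i, k⟩ := p
      obtain ⟨hk, h1', h2'⟩ := polar_sub_eq_single_iff.mp heq
      subst hk
      refine ⟨i, ?_, a', ha', h1', h2'⟩
      rw [polar_sub_apply] at hp
      split_ifs at hp with hc
      · omega
      · omega
  · rintro ⟨h0, h1⟩
    constructor
    · rintro _ ⟨a, ha, rfl⟩ hz
      rw [tsub_eq_zero_iff_le] at hz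
      exact h0 a ha (polarExp_le_iff.mp hz)
    · rintro _ ⟨a, ha, rfl⟩
      obtain ⟨i, hlt, a', ha', h1', h2'⟩ := h1 a ha
      refine ⟨(i, u i), ?_, ⟨a', ha', polar_sub_eq_single_iff.mpr ⟨rfl, h1', h2'⟩⟩⟩
      rw [polar_sub_apply, if_pos ⟨hlt, by omega⟩]

lemma polarIdeal_span (A : Set (Fin n →₀ ℕ)) :
    polarIdeal (Ideal.span ((fun a => mono K a) '' A))
      = Ideal.span ((fun a => mono K a) '' (polarExp '' A)) := by
  apply le_antisymm
  · rw [polarIdeal, Ideal.span_le]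
    rintro _ ⟨b, hb, rfl⟩
    show mono K (polarExp b) ∈ _
    obtain ⟨a, ha, hle⟩ := mono_mem_span_iff.mp hb
    have hle' : polarExp a ≤ polarExp b := polarExp_le_iff.mpr hle
    have heq : mono K (polarExp b)
        = mono K (polarExp b - polarExp a) * mono K (polarExp a) := by
      rw [mono, mono, mono, monomial_mul, mul_one, tsub_add_cancel_of_le hle']
    rw [heq]
    exact Ideal.mul_mem_left _ _
      (Ideal.subset_span ⟨polarExp a, ⟨a, ha, rfl⟩, rfl⟩)
  · rw [Ideal.span_le]
    rintro _ ⟨_, ⟨a, ha, rfl⟩, rfl⟩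
    exact Ideal.subset_span ⟨a, Ideal.subset_span ⟨a, ha, rfl⟩, rfl⟩

lemma filt_span {σ : Type*} {r : ℕ} (A : Set (σ →₀ ℕ)) (u : Fin r → (σ →₀ ℕ))
    (c : Fin (r + 1) → Ideal (MvPolynomial σ K))
    (hc0 : c 0 = Ideal.span ((fun a => mono K a) '' A))
    (hcs : ∀ j : Fin r, c j.succ = c j.castSucc ⊔ Ideal.span {mono K (u j)}) :
    ∀ j : Fin (r + 1),
      c j = Ideal.span ((fun a => mono K a) ''
        (A ∪ u '' {i : Fin r | i.castSucc < j})) := by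
  intro j
  induction j using Fin.induction with
  | zero =>
      have : {i : Fin r | i.castSucc < 0} = (∅ : Set (Fin r)) := by
        ext i; simp [Fin.not_lt_zero]
      rw [this]
      simpa using hc0
  | succ j ih =>
      have hset : {i : Fin r | i.castSucc < j.succ}
          = {i : Fin r | i.castSucc < j.castSucc} ∪ {j} := by
        ext i
        simp only [Set.mem_setOf_eq, Set.mem_union, Set.mem_singleton_iff,
          Fin.castSucc_lt_succ_iff, Fin.castSucc_lt_castSucc_iff]
        exact le_iff_lt_or_eq
      have hu : A ∪ u '' ({i : Fin r | i.castSucc < j.castSucc} ∪ {j})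
          = (A ∪ u '' {i : Fin r | i.castSucc < j.castSucc}) ∪ {u j} := by
        rw [Set.image_union, Set.image_singleton, ← Set.union_assoc]
      have h2 : Ideal.span ((fun a => mono K a) ''
            ((A ∪ u '' {i : Fin r | i.castSucc < j.castSucc}) ∪ {u j}))
          = Ideal.span ((fun a => mono K a) ''
              (A ∪ u '' {i : Fin r | i.castSucc < j.castSucc}))
            ⊔ Ideal.span {mono K (u j)} := by
        rw [Set.image_union, Ideal.span_union, Set.image_singleton]
      rw [hcs j, ih, hset, hu, h2]

end Main

/-- Let `F : I = I₀ ⊂ I₁ ⊂ ⋯ ⊂ I_r = S` with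
`I_j = (I_{j-1}, u_j)`, and let `F^p : I^p = J₀ ⊂ J₁ ⊂ ⋯ ⊂ J_r = T` with
`J_j = (J_{j-1}, u_j^p)` be its polarization. Then `F` is a prime filtration of
`S/I` if and only if `F^p` is a prime filtration of `T/I^p`. -/
theorem polarized_filtration_prime_iff
    {K : Type*} [Field K] {n : ℕ} (I : Ideal (MvPolynomial (Fin n) K))
    (hI : IsMonomialIdeal I) {r : ℕ} (u : Fin r → (Fin n →₀ ℕ))
    (c : Fin (r + 1) → Ideal (MvPolynomial (Fin n) K))
    (d : Fin (r + 1) → Ideal (MvPolynomial (Fin n × ℕ) K))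
    (hc0 : c 0 = I)
    (hcs : ∀ j : Fin r, c j.succ = c j.castSucc ⊔ Ideal.span {mono K (u j)})
    (hd0 : d 0 = polarIdeal I)
    (hds : ∀ j : Fin r,
      d j.succ = d j.castSucc ⊔ Ideal.span {mono K (polarExp (u j))}) :
    IsPrimeFiltration I c u ↔
      IsPrimeFiltration (polarIdeal I) d (fun j => polarExp (u j)) := by
  obtain ⟨A, hA⟩ := hI
  have hcj := filt_span A u c (hc0.trans hA) hcs
  have hd0' : d 0 = Ideal.span ((fun a => mono K a) '' (polarExp '' A)) := by
    rw [hd0, hA, polarIdeal_span]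
  have hdj := filt_span (polarExp '' A) (fun j => polarExp (u j)) d hd0' hds
  have hdj' : ∀ j : Fin (r + 1), d j = Ideal.span ((fun a => mono K a) ''
      (polarExp '' (A ∪ u '' {i : Fin r | i.castSucc < j}))) := by
    intro j
    have hs : polarExp '' (A ∪ u '' {i : Fin r | i.castSucc < j})
        = polarExp '' A ∪ (fun j => polarExp (u j)) '' {i : Fin r | i.castSucc < j} := by
      rw [Set.image_union, Set.image_image]
    rw [hdj j, hs]
  have htop : (c (Fin.last r) = ⊤) ↔ (d (Fin.last r) = ⊤) := by
    rw [hcj, hdj', span_mono_eq_top_iff, span_mono_eq_top_iff]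
    constructor
    · intro h0
      exact ⟨0, h0, polarExp_eq_zero_iff.mpr rfl⟩
    · rintro ⟨a, ha, haz⟩
      rwa [polarExp_eq_zero_iff.mp haz] at ha
  have hpr : ∀ j : Fin r,
      ((c j.castSucc).colon (Ideal.span {mono K (u j)})).IsPrime ↔
      ((d j.castSucc).colon (Ideal.span {mono K (polarExp (u j))})).IsPrime := by
    intro j
    rw [hcj, hdj', prime_colon_iff_cond, polar_prime_colon_iff_cond]
  constructor
  · rintro ⟨-, h2, -, h4⟩
    exact ⟨hd0, htop.mp h2, hds, fun j => (hpr j).mp (h4 j)⟩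
  · rintro ⟨-, h2, -, h4⟩
    exact ⟨hc0, htop.mpr h2, hcs, fun j => (hpr j).mpr (h4 j)⟩
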